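/- For p = 2, a function f : ℤ_2 → ℤ_2 is compatible and bijective modulo 2^k for all k ≥ 1 if and only if it can be represented in the form f(x) = c + x + 2·v(x), where c ∈ ℤ_2 and v : ℤ_2 → ℤ_2 is a compatible (1-Lipschitz) function. -/

import Mathlib

/-- A function on the `p`-adic integers is *compatible* if it is 1-Lipschitz. -/
def IsCompatible {p : ℕ} [Fact p.Prime] (f : ℤ_[p] → ℤ_[p]) : Prop :=
  ∀ x y : ℤ_[p], ‖f x - f y‖ ≤ ‖x - y‖

/-- `f` is bijective modulo `p^k`: it induces a bijection of `ZMod (p^k)`. -/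
def BijectiveMod {p : ℕ} [Fact p.Prime] (f : ℤ_[p] → ℤ_[p]) (k : ℕ) : Prop :=
  ∃ g : ZMod (p ^ k) → ZMod (p ^ k),
    (∀ x : ℤ_[p], g (PadicInt.toZModPow k x) = PadicInt.toZModPow k (f x)) ∧
    Function.Bijective g


lemma eqmod_iff (k : ℕ) (x y : ℤ_[2]) :
    PadicInt.toZModPow k x = PadicInt.toZModPow k y ↔ ‖x - y‖ ≤ (2:ℝ) ^ (-(k:ℤ)) := by
  rw [← sub_eq_zero, ← map_sub, ← RingHom.mem_ker, PadicInt.ker_toZModPow,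
    ← PadicInt.norm_le_pow_iff_mem_span_pow]
  norm_num

lemma two_units_eq : ∀ a b : ZMod (2^1), a ≠ 0 → b ≠ 0 → a = b := by decide

lemma unit_sub (u w : ℤ_[2]) (hu : ‖u‖ = 1) (hw : ‖w‖ = 1) : ‖u - w‖ ≤ 2⁻¹ := by
  have h1 : (2:ℝ)^(-(1:ℕ):ℤ) = 2⁻¹ := by norm_num
  rw [← h1, ← eqmod_iff 1 u w]
  have hnz : ∀ z : ℤ_[2], ‖z‖ = 1 → PadicInt.toZModPow 1 z ≠ 0 := by
    intro z hz h0
    have : PadicInt.toZModPow 1 z = PadicInt.toZModPow 1 0 := by simpa using h0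
    rw [eqmod_iff] at this
    rw [sub_zero, hz] at this
    norm_num at this
  exact two_units_eq _ _ (hnz u hu) (hnz w hw)

lemma key_half {a b : ℤ_[2]} (h : ‖a‖ = ‖b‖) : ‖a - b‖ ≤ 2⁻¹ * ‖a‖ := by
  rcases eq_or_ne a 0 with rfl | ha
  · have : b = 0 := by rwa [norm_zero, eq_comm, norm_eq_zero] at h
    simp [this]
  have hb : b ≠ 0 := by
    intro hb; rw [hb, norm_zero, norm_eq_zero] at h; exact ha h
  have hval : a.valuation = b.valuation := by
    have ha' := PadicInt.norm_eq_zpow_neg_valuation ha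
    have hb' := PadicInt.norm_eq_zpow_neg_valuation hb
    rw [ha', hb'] at h
    have := zpow_right_injective₀ (by positivity : (0:ℝ) < ((2:ℕ):ℝ))
      (by norm_num : ((2:ℕ):ℝ) ≠ 1) h
    omega
  set n := b.valuation with hn
  obtain ⟨u, hun, hu⟩ : ∃ u : ℤ_[2], ‖u‖ = 1 ∧
      a = u * ((2:ℕ):ℤ_[2]) ^ n := by
    refine ⟨PadicInt.unitCoeff ha, PadicInt.norm_units _, ?_⟩
    rw [← hval]; exact PadicInt.unitCoeff_spec ha
  obtain ⟨w, hwn, hw⟩ : ∃ w : ℤ_[2], ‖w‖ = 1 ∧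
      b = w * ((2:ℕ):ℤ_[2]) ^ n :=
    ⟨PadicInt.unitCoeff hb, PadicInt.norm_units _, PadicInt.unitCoeff_spec hb⟩
  have heq : a - b = (u - w) * ((2:ℕ):ℤ_[2]) ^ n := by
    rw [hu, hw]; ring
  rw [heq, norm_mul, hu, norm_mul, hun, one_mul]
  exact mul_le_mul_of_nonneg_right (unit_sub u w hun hwn)
    (norm_nonneg (((2:ℕ):ℤ_[2]) ^ n))

lemma norm_two' : ‖(2:ℤ_[2])‖ = 2⁻¹ := by
  have := @PadicInt.norm_p 2 _
  norm_num at this ⊢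
  exact_mod_cast this

lemma norm_isom (f : ℤ_[2] → ℤ_[2]) (hc : IsCompatible f)
    (hb : ∀ k : ℕ, 1 ≤ k → BijectiveMod f k) (x y : ℤ_[2]) :
    ‖f x - f y‖ = ‖x - y‖ := by
  refine le_antisymm (hc x y) ?_
  by_contra h'
  push_neg at h'
  rcases eq_or_ne x y with rfl | hxy
  · simp at h'
  have hsub : x - y ≠ 0 := sub_ne_zero.mpr hxy
  set k := (x - y).valuation with hkdef
  have hk : ‖x - y‖ = (2:ℝ) ^ (-(k:ℤ)) := by
    rw [PadicInt.norm_eq_zpow_neg_valuation hsub]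
    rw [hkdef]
    norm_num
  have hlt2 : ‖f x - f y‖ < (2:ℝ) ^ (-(k:ℤ)) := hk ▸ h'
  have hfle : ‖f x - f y‖ ≤ (2:ℝ) ^ (-((k+1:ℕ)):ℤ) := by
    have H := PadicInt.norm_lt_pow_iff_norm_le_pow_sub_one (f x - f y) (-(k:ℤ))
    push_cast at H ⊢
    rw [show (-((k:ℤ) + 1) : ℤ) = -(k:ℤ) - 1 by ring]
    exact H.mp hlt2
  obtain ⟨g, hg, hginj, -⟩ := hb (k+1) (by omega)
  have h1 : PadicInt.toZModPow (k+1) (f x) = PadicInt.toZModPow (k+1) (f y) := by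
    rw [eqmod_iff]; exact hfle
  have h2 : PadicInt.toZModPow (k+1) x = PadicInt.toZModPow (k+1) y := by
    apply hginj; rw [hg, hg, h1]
  rw [eqmod_iff] at h2
  have : (2:ℝ) ^ (-((k+1:ℕ)):ℤ) < (2:ℝ) ^ (-(k:ℤ)) := by
    apply zpow_lt_zpow_right₀ (by norm_num)
    push_cast; omega
  rw [hk] at h2
  linarith

theorem stmt5 (f : ℤ_[2] → ℤ_[2]) :
    (IsCompatible f ∧ ∀ k : ℕ, 1 ≤ k → BijectiveMod f k) ↔
      ∃ (c : ℤ_[2]) (v : ℤ_[2] → ℤ_[2]), IsCompatible v ∧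
        ∀ x : ℤ_[2], f x = c + x + 2 * v x := by
  constructor
  · rintro ⟨hc, hb⟩
    have hest : ∀ x y : ℤ_[2], ‖(f x - f y) - (x - y)‖ ≤ 2⁻¹ * ‖x - y‖ := by
      intro x y
      have := key_half (a := f x - f y) (b := x - y) (norm_isom f hc hb x y)
      rwa [norm_isom f hc hb x y] at this
    have hdvd : ∀ x : ℤ_[2], (2:ℤ_[2]) ∣ (f x - f 0 - x) := by
      intro x
      have h1 : ‖f x - f 0 - x‖ ≤ 2⁻¹ * ‖x - 0‖ := by
        have := hest x 0
        rw [sub_zero] at this ⊢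
        exact this
      have hx1 : ‖f x - f 0 - x‖ ≤ 2⁻¹ := by
        rw [sub_zero] at h1
        nlinarith [PadicInt.norm_le_one x, norm_nonneg x]
      have h2 : ‖f x - f 0 - x‖ ≤ ((2:ℕ):ℝ) ^ (-(1:ℕ):ℤ) := by
        push_cast
        rw [show (-(1:ℤ) : ℤ) = -1 by ring, zpow_neg, zpow_one]
        exact hx1
      rw [PadicInt.norm_le_pow_iff_mem_span_pow, Ideal.mem_span_singleton, pow_one] at h2
      exact_mod_cast h2
    refine ⟨f 0, fun x => (hdvd x).choose, ?_, ?_⟩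
    · intro x y
      have hx := (hdvd x).choose_spec
      have hy := (hdvd y).choose_spec
      have h2 : (2:ℤ_[2]) * ((hdvd x).choose - (hdvd y).choose)
          = (f x - f y) - (x - y) := by linear_combination -hx + hy
      have h3 : ‖(2:ℤ_[2]) * ((hdvd x).choose - (hdvd y).choose)‖
          = 2⁻¹ * ‖(hdvd x).choose - (hdvd y).choose‖ := by
        rw [norm_mul, norm_two']
      rw [h2] at h3
      have h4 := hest x y
      rw [h3] at h4
      show ‖(hdvd x).choose - (hdvd y).choose‖ ≤ ‖x - y‖
      linarith
    · intro x
      have hx := (hdvd x).choose_spec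
      linear_combination hx
  · rintro ⟨c, v, hv, hf⟩
    have hcomp : IsCompatible f := by
      intro x y
      have h1 : f x - f y = (x - y) + 2 * (v x - v y) := by
        linear_combination hf x - hf y
      rw [h1]
      refine le_trans (PadicInt.nonarchimedean _ _) (max_le le_rfl ?_)
      rw [norm_mul, norm_two']
      nlinarith [hv x y, norm_nonneg (v x - v y), norm_nonneg (x - y)]
    have hback : ∀ (k : ℕ) (x y : ℤ_[2]), ‖f x - f y‖ ≤ (2:ℝ) ^ (-(k:ℤ)) →
        ‖x - y‖ ≤ (2:ℝ) ^ (-(k:ℤ)) := by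
      intro k x y h
      by_contra h'
      push_neg at h'
      have h1 : x - y = (f x - f y) + (-(2 * (v x - v y))) := by
        linear_combination hf y - hf x
      have h2 : ‖x - y‖ ≤ max ‖f x - f y‖ ‖-(2 * (v x - v y))‖ := by
        rw [h1]; exact PadicInt.nonarchimedean _ _
      rw [norm_neg, norm_mul, norm_two'] at h2
      have h3 : 2⁻¹ * ‖v x - v y‖ ≤ 2⁻¹ * ‖x - y‖ := by
        nlinarith [hv x y]
      have hpos : (0:ℝ) < (2:ℝ) ^ (-(k:ℤ)) := by positivity
      rcases le_max_iff.mp h2 with h4 | h4 <;> linarith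
    refine ⟨hcomp, fun k _ => ?_⟩
    haveI : NeZero ((2:ℕ)^k) := ⟨pow_ne_zero k (by norm_num)⟩
    refine ⟨fun a => PadicInt.toZModPow k (f ((a.val : ℤ_[2]))), ?_, ?_⟩
    · intro x
      have hval : PadicInt.toZModPow k (((PadicInt.toZModPow k x).val : ℤ_[2]))
          = PadicInt.toZModPow k x := by
        rw [map_natCast, ZMod.natCast_zmod_val]
      rw [eqmod_iff]
      apply le_trans (hcomp _ _)
      rw [← eqmod_iff]
      exact hval
    · rw [← Finite.injective_iff_bijective]
      intro a b hab
      have h1 : ‖f ((a.val : ℤ_[2])) - f ((b.val : ℤ_[2]))‖ ≤ (2:ℝ) ^ (-(k:ℤ)) := by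
        rw [← eqmod_iff]; exact hab
      have h2 := hback k _ _ h1
      rw [← eqmod_iff] at h2
      rwa [map_natCast, map_natCast, ZMod.natCast_zmod_val, ZMod.natCast_zmod_val] at h2
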